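/- Let (X,Y) be jointly distributed random variables on finite alphabets, fix a pair of values (x,y), write Δ_{xy} = P_{xy} − P_x·P_y and Δ̂_{xy} = P̂_{xy} − P̂_x·P̂_y, let N > 1 be an integer and δ ∈ (0,1). Then with probability at least 1−3δ over N i.i.d. samples of (X,Y), |Δ̂_{xy} − Δ_{xy}| ≤ 3·√(|Δ_{xy}|·log(2/δ)/N) + 9·√(P_x·P_y·log(2/δ)/N) + 39·log(2/δ)/N + 18·log²(2/δ)/N². -/

import Mathlib

open scoped BigOperators

noncomputable section

open Classical in
/-- Probability that `N` i.i.d. samples from the pmf `p` satisfy the event `E`. -/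
noncomputable def iidProb {α : Type*} [Fintype α] (p : α → ℝ) (N : ℕ)
    (E : (Fin N → α) → Prop) : ℝ :=
  ∑ s : Fin N → α, if E s then ∏ i, p (s i) else 0

open Classical in
/-- Empirical frequency (relative frequency) of the outcome `a` among the samples `s`. -/
noncomputable def empFreq {α : Type*} [Fintype α] {N : ℕ} (s : Fin N → α) (a : α) : ℝ :=
  ((Finset.univ.filter fun i => s i = a).card : ℝ) / N

/-- Marginal of the first coordinate of a joint pmf. -/
noncomputable def margFst {α β : Type*} [Fintype β] (p : α × β → ℝ) (x : α) : ℝ :=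
  ∑ y, p (x, y)

/-- Marginal of the second coordinate of a joint pmf. -/
noncomputable def margSnd {α β : Type*} [Fintype α] (p : α × β → ℝ) (y : β) : ℝ :=
  ∑ x, p (x, y)

/-- Mutual information `I(X;Y)` of a joint pmf on `α × β` (natural logarithm;
summands with zero probability vanish since `Real.log 0 = 0` and `x / 0 = 0`). -/
noncomputable def mutInfo {α β : Type*} [Fintype α] [Fintype β] (p : α × β → ℝ) : ℝ :=
  ∑ x, ∑ y, p (x, y) * Real.log (p (x, y) / (margFst p x * margSnd p y))

/-- Conditional mutual information `I(X;Y∣Z)` of a joint pmf on `α × β × γ`. -/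
noncomputable def condMutInfo {α β γ : Type*} [Fintype α] [Fintype β] [Fintype γ]
    (p : α × β × γ → ℝ) : ℝ :=
  ∑ x, ∑ y, ∑ z, p (x, y, z) *
    Real.log (p (x, y, z) * (∑ x', ∑ y', p (x', y', z)) /
      ((∑ y', p (x, y', z)) * (∑ x', p (x', y, z))))

section AuxConcentration

open Classical Finset Real
set_option maxHeartbeats 1000000
set_option linter.unusedSectionVars false
set_option linter.unusedVariables false

variable {α : Type*} [Fintype α] {p : α → ℝ} {N : ℕ}

lemma sum_prod_weights (hsum : ∑ a, p a = 1) (N : ℕ) :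
    ∑ s : Fin N → α, ∏ i, p (s i) = 1 := by
  rw [← Fintype.sum_pow p N, hsum, one_pow]

lemma prodw_nonneg (hp : ∀ w, 0 ≤ p w) (s : Fin N → α) : 0 ≤ ∏ i, p (s i) :=
  Finset.prod_nonneg fun i _ => hp _

lemma iidProb_nonneg (hp : ∀ w, 0 ≤ p w) (E : (Fin N → α) → Prop) :
    0 ≤ iidProb p N E :=
  Finset.sum_nonneg fun s _ => by
    split
    · exact prodw_nonneg hp s
    · exact le_refl 0

lemma iidProb_add_compl (hsum : ∑ a, p a = 1) (E : (Fin N → α) → Prop) :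
    iidProb p N E + iidProb p N (fun s => ¬ E s) = 1 := by
  unfold iidProb
  rw [← Finset.sum_add_distrib]
  rw [← sum_prod_weights hsum N]
  refine Finset.sum_congr rfl fun s _ => ?_
  by_cases h : E s <;> simp [h]

lemma iidProb_mono {E F : (Fin N → α) → Prop} (hp : ∀ w, 0 ≤ p w)
    (h : ∀ s, E s → F s) : iidProb p N E ≤ iidProb p N F := by
  refine Finset.sum_le_sum fun s _ => ?_
  by_cases hE : E s
  · simp [hE, h s hE]
  · simp only [hE, if_false]
    split
    · exact prodw_nonneg hp s
    · exact le_refl 0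

lemma iidProb_or_le {E F : (Fin N → α) → Prop} (hp : ∀ w, 0 ≤ p w) :
    iidProb p N (fun s => E s ∨ F s) ≤ iidProb p N E + iidProb p N F := by
  unfold iidProb
  rw [← Finset.sum_add_distrib]
  refine Finset.sum_le_sum fun s _ => ?_
  have hw := prodw_nonneg hp s
  by_cases hE : E s <;> by_cases hF : F s <;> simp [hE, hF] <;> linarith

/-- count of samples satisfying Q -/
noncomputable def cntQ (Q : α → Prop) (s : Fin N → α) : ℝ :=
  ((univ.filter fun i => Q (s i)).card : ℝ)

lemma mgf_eq (Q : α → Prop) (t : ℝ) (N : ℕ) :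
    ∑ s : Fin N → α, (∏ i, p (s i)) * Real.exp (t * cntQ Q s) =
      (∑ a, p a * Real.exp (t * if Q a then 1 else 0)) ^ N := by
  rw [Fintype.sum_pow]
  refine Finset.sum_congr rfl fun s _ => ?_
  rw [Finset.prod_mul_distrib]
  congr 1
  rw [← Real.exp_sum]
  congr 1
  unfold cntQ
  rw [Finset.card_filter]
  push_cast
  rw [Finset.mul_sum]

lemma chernoff_ge (hp : ∀ w, 0 ≤ p w) (Q : α → Prop) {t : ℝ} (ht : 0 ≤ t) (a : ℝ) :
    iidProb p N (fun s => a ≤ cntQ Q s) ≤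
      Real.exp (-(t * a)) * (∑ b, p b * Real.exp (t * if Q b then 1 else 0)) ^ N := by
  rw [← mgf_eq, Finset.mul_sum]
  refine Finset.sum_le_sum fun s _ => ?_
  have hw := prodw_nonneg hp s
  by_cases hE : a ≤ cntQ Q s
  · simp only [hE, if_true]
    have h1 : (1:ℝ) ≤ Real.exp (-(t*a)) * Real.exp (t * cntQ Q s) := by
      rw [← Real.exp_add]
      rw [show -(t*a) + t * cntQ Q s = t * (cntQ Q s - a) by ring]
      exact Real.one_le_exp (by nlinarith)
    nlinarith [Real.exp_pos (-(t*a)), Real.exp_pos (t * cntQ Q s)]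
  · simp only [hE, if_false]
    positivity

lemma chernoff_le (hp : ∀ w, 0 ≤ p w) (Q : α → Prop) {t : ℝ} (ht : 0 ≤ t) (a : ℝ) :
    iidProb p N (fun s => cntQ Q s ≤ a) ≤
      Real.exp (t * a) * (∑ b, p b * Real.exp (-t * if Q b then 1 else 0)) ^ N := by
  rw [← mgf_eq, Finset.mul_sum]
  refine Finset.sum_le_sum fun s _ => ?_
  have hw := prodw_nonneg hp s
  by_cases hE : cntQ Q s ≤ a
  · simp only [hE, if_true]
    have h1 : (1:ℝ) ≤ Real.exp (t*a) * Real.exp (-t * cntQ Q s) := by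
      rw [← Real.exp_add]
      rw [show t*a + -t * cntQ Q s = t * (a - cntQ Q s) by ring]
      exact Real.one_le_exp (by nlinarith)
    nlinarith [Real.exp_pos (t*a), Real.exp_pos (-t * cntQ Q s)]
  · simp only [hE, if_false]
    positivity

noncomputable def qVal (p : α → ℝ) (Q : α → Prop) : ℝ := ∑ a, if Q a then p a else 0

lemma qVal_nonneg (hp : ∀ w, 0 ≤ p w) (Q : α → Prop) : 0 ≤ qVal p Q :=
  Finset.sum_nonneg fun a _ => by split <;> [exact hp a; exact le_refl 0]

lemma qVal_le_one (hp : ∀ w, 0 ≤ p w) (hsum : ∑ a, p a = 1) (Q : α → Prop) :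
    qVal p Q ≤ 1 := by
  rw [← hsum]
  refine Finset.sum_le_sum fun a _ => ?_
  split <;> [exact le_refl _; exact hp a]

lemma base_eq (hsum : ∑ a, p a = 1) (Q : α → Prop) (u : ℝ) :
    ∑ a, p a * Real.exp (u * if Q a then 1 else 0) =
      1 + qVal p Q * (Real.exp u - 1) := by
  have h : ∀ a, p a * Real.exp (u * if Q a then 1 else 0) =
      p a + (if Q a then p a else 0) * (Real.exp u - 1) := by
    intro a
    by_cases hQ : Q a <;> simp [hQ] <;> ring
  simp only [h]
  rw [Finset.sum_add_distrib, hsum, ← Finset.sum_mul]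
  rfl

lemma base_pow_le (hp : ∀ w, 0 ≤ p w) (hsum : ∑ a, p a = 1) (Q : α → Prop) (u : ℝ) :
    (∑ a, p a * Real.exp (u * if Q a then 1 else 0)) ^ N ≤
      Real.exp ((N : ℝ) * (qVal p Q * (Real.exp u - 1))) := by
  rw [base_eq hsum, Real.exp_nat_mul]
  have hq0 := qVal_nonneg hp Q
  have hq1 := qVal_le_one hp hsum Q
  have hnn : 0 ≤ 1 + qVal p Q * (Real.exp u - 1) := by
    rcases le_or_gt 1 (Real.exp u) with h | h
    · nlinarith
    · nlinarith [Real.exp_pos u]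
  exact pow_le_pow_left₀ hnn (by linarith [Real.add_one_le_exp (qVal p Q * (Real.exp u - 1))]) N

lemma exp_le_quad {x : ℝ} (h : |x| ≤ 1) : Real.exp x ≤ 1 + x + x ^ 2 := by
  have hb := Real.exp_bound h (by norm_num : 0 < 2)
  have h2 : (∑ m ∈ Finset.range 2, x ^ m / m.factorial) = 1 + x := by
    simp [Finset.sum_range_succ]
  rw [h2] at hb
  have := (abs_le.1 hb).2
  have hx2 : |x| ^ 2 = x ^ 2 := sq_abs x
  rw [hx2] at this
  norm_num [Nat.factorial] at this
  nlinarith [sq_nonneg x]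

lemma pick_t {q ε L Nr : ℝ} (hq : 0 ≤ q) (hL : 0 < L) (hN : 0 < Nr)
    (hε : ε = 2 * Real.sqrt (q * L / Nr) + 2 * L / Nr) :
    ∃ t : ℝ, 0 ≤ t ∧ t ≤ 1 ∧ Nr * (q * t ^ 2 - t * ε) ≤ -L := by
  have hqLN : 0 ≤ q * L / Nr := by positivity
  have hs := Real.sq_sqrt hqLN
  have hsn := Real.sqrt_nonneg (q * L / Nr)
  have hε0 : 0 < ε := by rw [hε]; positivity
  have hε2L : 2 * L / Nr ≤ ε := by rw [hε]; linarith
  have hεsq : 4 * (q * L / Nr) ≤ ε ^ 2 := by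
    rw [hε]
    have h4 : 4 * (q * L / Nr) = (2 * Real.sqrt (q * L / Nr)) ^ 2 := by
      rw [mul_pow, hs]; ring
    rw [h4]
    apply pow_le_pow_left₀ (by positivity)
    have : 0 ≤ 2 * L / Nr := by positivity
    linarith
  rcases le_or_gt ε (2 * q) with hcase | hcase
  · have hq0 : 0 < q := by linarith
    refine ⟨ε / (2 * q), by positivity, by
      rw [div_le_one (by linarith)]; linarith, ?_⟩
    have key : Nr * (q * (ε / (2 * q)) ^ 2 - (ε / (2 * q)) * ε) = - (Nr * ε ^ 2 / (4 * q)) := by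
      field_simp
      ring
    rw [key]
    have : 4 * (q * L) ≤ Nr * ε ^ 2 := by
      have := mul_le_mul_of_nonneg_left hεsq (le_of_lt hN)
      calc 4 * (q * L) = Nr * (4 * (q * L / Nr)) := by field_simp
        _ ≤ Nr * ε ^ 2 := this
    rw [neg_le_neg_iff, le_div_iff₀ (by positivity)]
    linarith
  · refine ⟨1, zero_le_one, le_refl 1, ?_⟩
    have h1 : 2 * L ≤ Nr * ε := by
      have := mul_le_mul_of_nonneg_left hε2L (le_of_lt hN)
      calc 2 * L = Nr * (2 * L / Nr) := by field_simp
        _ ≤ Nr * ε := this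
    nlinarith

lemma bernstein_tail (hp : ∀ w, 0 ≤ p w) (hsum : ∑ a, p a = 1) (Q : α → Prop)
    {δ' : ℝ} (hδ0 : 0 < δ') (hδ1 : δ' < 1) (hN : 0 < N) :
    iidProb p N (fun s => ¬ (|cntQ Q s / N - qVal p Q| ≤
      2 * Real.sqrt (qVal p Q * Real.log (2/δ') / N) + 2 * Real.log (2/δ') / N)) ≤ δ' := by
  set L := Real.log (2/δ') with hLdef
  have hL : 0 < L := Real.log_pos (by rw [lt_div_iff₀ hδ0]; linarith)
  set q := qVal p Q with hqdef
  set ε : ℝ := 2 * Real.sqrt (q * L / N) + 2 * L / N with hεdef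
  have hNr : (0:ℝ) < N := Nat.cast_pos.mpr hN
  have hq0 : 0 ≤ q := qVal_nonneg hp Q
  obtain ⟨t, ht0, ht1, htkey⟩ := pick_t hq0 hL hNr hεdef
  have habs : |t| ≤ 1 := by rw [abs_of_nonneg ht0]; exact ht1
  have hquad1 : Real.exp t ≤ 1 + t + t ^ 2 := exp_le_quad habs
  have hquad2 : Real.exp (-t) ≤ 1 - t + t ^ 2 := by
    have := exp_le_quad (x := -t) (by rwa [abs_neg])
    nlinarith [this]
  have hexpδ : Real.exp (-L) = δ' / 2 := by
    rw [Real.exp_neg, hLdef, Real.exp_log (by positivity)]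
    field_simp
  have hup : iidProb p N (fun s => (N:ℝ) * (q + ε) ≤ cntQ Q s) ≤ δ' / 2 := by
    calc iidProb p N (fun s => (N:ℝ) * (q + ε) ≤ cntQ Q s)
        ≤ Real.exp (-(t * ((N:ℝ) * (q + ε)))) *
            (∑ b, p b * Real.exp (t * if Q b then 1 else 0)) ^ N :=
          chernoff_ge hp Q ht0 _
      _ ≤ Real.exp (-(t * ((N:ℝ) * (q + ε)))) * Real.exp ((N:ℝ) * (q * (Real.exp t - 1))) :=
          mul_le_mul_of_nonneg_left (base_pow_le hp hsum Q t) (Real.exp_pos _).le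
      _ = Real.exp ((N:ℝ) * (q * (Real.exp t - 1) - t * (q + ε))) := by
          rw [← Real.exp_add]; ring_nf
      _ ≤ Real.exp (-L) := by
          apply Real.exp_le_exp.2
          have h1 : (N:ℝ) * (q * (Real.exp t - 1) - t * (q + ε)) ≤
              (N:ℝ) * (q * t ^ 2 - t * ε) := by
            apply mul_le_mul_of_nonneg_left _ hNr.le
            nlinarith [hquad1]
          linarith
      _ = δ' / 2 := hexpδ
  have hlo : iidProb p N (fun s => cntQ Q s ≤ (N:ℝ) * (q - ε)) ≤ δ' / 2 := by
    calc iidProb p N (fun s => cntQ Q s ≤ (N:ℝ) * (q - ε))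
        ≤ Real.exp (t * ((N:ℝ) * (q - ε))) *
            (∑ b, p b * Real.exp (-t * if Q b then 1 else 0)) ^ N :=
          chernoff_le hp Q ht0 _
      _ ≤ Real.exp (t * ((N:ℝ) * (q - ε))) * Real.exp ((N:ℝ) * (q * (Real.exp (-t) - 1))) :=
          mul_le_mul_of_nonneg_left (base_pow_le hp hsum Q (-t)) (Real.exp_pos _).le
      _ = Real.exp ((N:ℝ) * (q * (Real.exp (-t) - 1) + t * (q - ε))) := by
          rw [← Real.exp_add]; ring_nf
      _ ≤ Real.exp (-L) := by
          apply Real.exp_le_exp.2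
          have h1 : (N:ℝ) * (q * (Real.exp (-t) - 1) + t * (q - ε)) ≤
              (N:ℝ) * (q * t ^ 2 - t * ε) := by
            apply mul_le_mul_of_nonneg_left _ hNr.le
            nlinarith [hquad2]
          linarith
      _ = δ' / 2 := hexpδ
  have hmono : ∀ s : Fin N → α, (¬ (|cntQ Q s / N - q| ≤ ε)) →
      ((N:ℝ) * (q + ε) ≤ cntQ Q s ∨ cntQ Q s ≤ (N:ℝ) * (q - ε)) := by
    intro s h
    rw [not_le] at h
    rcases lt_abs.1 h with h' | h'
    · left
      have : q + ε < cntQ Q s / N := by linarith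
      rw [lt_div_iff₀ hNr] at this
      linarith
    · right
      have : cntQ Q s / N < q - ε := by linarith
      rw [div_lt_iff₀ hNr] at this
      linarith
  calc iidProb p N (fun s => ¬ (|cntQ Q s / N - q| ≤ ε))
      ≤ iidProb p N (fun s => (N:ℝ) * (q + ε) ≤ cntQ Q s ∨ cntQ Q s ≤ (N:ℝ) * (q - ε)) :=
        iidProb_mono hp hmono
    _ ≤ iidProb p N (fun s => (N:ℝ) * (q + ε) ≤ cntQ Q s) +
          iidProb p N (fun s => cntQ Q s ≤ (N:ℝ) * (q - ε)) := iidProb_or_le hp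
    _ ≤ δ' / 2 + δ' / 2 := add_le_add hup hlo
    _ = δ' := by ring

lemma sqrt_add_le' {x y : ℝ} (hx : 0 ≤ x) (hy : 0 ≤ y) :
    Real.sqrt (x + y) ≤ Real.sqrt x + Real.sqrt y := by
  have h := Real.sqrt_le_sqrt (show x + y ≤ (Real.sqrt x + Real.sqrt y) ^ 2 by
    nlinarith [Real.sq_sqrt hx, Real.sq_sqrt hy, Real.sqrt_nonneg x, Real.sqrt_nonneg y,
      mul_nonneg (Real.sqrt_nonneg x) (Real.sqrt_nonneg y)])
  rwa [Real.sqrt_sq (by positivity)] at h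

lemma arith_combine {a b c ah bh ch L Nr : ℝ} (hL : 0 < L) (hN : 0 < Nr)
    (ha : 0 ≤ a) (hb0 : 0 ≤ b) (hb1 : b ≤ 1) (hc0 : 0 ≤ c) (hc1 : c ≤ 1)
    (h1 : |ah - a| ≤ 2 * Real.sqrt (a * L / Nr) + 2 * L / Nr)
    (h2 : |bh - b| ≤ 2 * Real.sqrt (b * L / Nr) + 2 * L / Nr)
    (h3 : |ch - c| ≤ 2 * Real.sqrt (c * L / Nr) + 2 * L / Nr) :
    |(ah - bh * ch) - (a - b * c)| ≤
      3 * Real.sqrt (|a - b * c| * L / Nr) + 9 * Real.sqrt (b * c * L / Nr) +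
        39 * L / Nr + 18 * L ^ 2 / Nr ^ 2 := by
  have hrdef : ∀ u : ℝ, u * L / Nr = u * (L / Nr) := fun u => by ring
  set r : ℝ := L / Nr with hr0
  have hr : 0 < r := by positivity
  have e1 : ∀ u : ℝ, u * L / Nr = u * r := fun u => by rw [hr0]; ring
  have e2 : 18 * L ^ 2 / Nr ^ 2 = 18 * r ^ 2 := by rw [hr0]; field_simp
  simp only [e1, e2] at h1 h2 h3 ⊢
  set sr : ℝ := Real.sqrt r with hsrdef
  have hsr0 : 0 ≤ sr := Real.sqrt_nonneg r
  have hsr2 : sr ^ 2 = r := Real.sq_sqrt hr.le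
  have hsrr : sr * r ≤ (r + r ^ 2) / 2 := by nlinarith [sq_nonneg (sr - r)]
  -- bounds by sr
  have hsb : Real.sqrt (b * r) ≤ sr := Real.sqrt_le_sqrt (by nlinarith)
  have hsc : Real.sqrt (c * r) ≤ sr := Real.sqrt_le_sqrt (by nlinarith)
  have h2' : |bh - b| ≤ 2 * sr + 2 * r := h2.trans (by linarith)
  have h3' : |ch - c| ≤ 2 * sr + 2 * r := h3.trans (by linarith)
  -- product bound
  have hprod : |bh - b| * |ch - c| ≤ 8 * r + 8 * r ^ 2 := by
    calc |bh - b| * |ch - c| ≤ (2 * sr + 2 * r) * (2 * sr + 2 * r) :=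
          mul_le_mul h2' h3' (abs_nonneg _) (by positivity)
      _ = 4 * sr ^ 2 + 8 * (sr * r) + 4 * r ^ 2 := by ring
      _ ≤ 8 * r + 8 * r ^ 2 := by rw [hsr2]; linarith
  -- b * sqrt(c r) ≤ sqrt(b c r), c * sqrt(b r) ≤ sqrt(b c r)
  have hbsc : b * Real.sqrt (c * r) ≤ Real.sqrt (b * c * r) := by
    have hb2 : b * Real.sqrt (c * r) = Real.sqrt (b ^ 2 * (c * r)) := by
      rw [Real.sqrt_mul (sq_nonneg b), Real.sqrt_sq hb0]
    rw [hb2]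
    apply Real.sqrt_le_sqrt
    nlinarith [mul_nonneg (by nlinarith : (0:ℝ) ≤ b - b ^ 2) (by positivity : (0:ℝ) ≤ c * r)]
  have hcsb : c * Real.sqrt (b * r) ≤ Real.sqrt (b * c * r) := by
    have hc2 : c * Real.sqrt (b * r) = Real.sqrt (c ^ 2 * (b * r)) := by
      rw [Real.sqrt_mul (sq_nonneg c), Real.sqrt_sq hc0]
    rw [hc2]
    apply Real.sqrt_le_sqrt
    nlinarith [mul_nonneg (by nlinarith : (0:ℝ) ≤ c - c ^ 2) (by positivity : (0:ℝ) ≤ b * r)]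
  -- sqrt(a r) ≤ sqrt(|a - bc| r) + sqrt(bc r)
  have hsa : Real.sqrt (a * r) ≤ Real.sqrt (|a - b * c| * r) + Real.sqrt (b * c * r) := by
    have h5 : a * r ≤ |a - b * c| * r + b * c * r := by
      have : a ≤ |a - b * c| + b * c := by
        have := le_abs_self (a - b * c); linarith
      nlinarith
    calc Real.sqrt (a * r) ≤ Real.sqrt (|a - b * c| * r + b * c * r) := Real.sqrt_le_sqrt h5
      _ ≤ Real.sqrt (|a - b * c| * r) + Real.sqrt (b * c * r) :=
          sqrt_add_le' (by positivity) (by positivity)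
  -- marginal deviation bounds
  have hbch : b * |ch - c| ≤ 2 * Real.sqrt (b * c * r) + 2 * r := by
    calc b * |ch - c| ≤ b * (2 * Real.sqrt (c * r) + 2 * r) :=
          mul_le_mul_of_nonneg_left h3 hb0
      _ = 2 * (b * Real.sqrt (c * r)) + 2 * (b * r) := by ring
      _ ≤ 2 * Real.sqrt (b * c * r) + 2 * r := by nlinarith
  have hcbh : c * |bh - b| ≤ 2 * Real.sqrt (b * c * r) + 2 * r := by
    calc c * |bh - b| ≤ c * (2 * Real.sqrt (b * r) + 2 * r) :=
          mul_le_mul_of_nonneg_left h2 hc0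
      _ = 2 * (c * Real.sqrt (b * r)) + 2 * (c * r) := by ring
      _ ≤ 2 * Real.sqrt (b * c * r) + 2 * r := by nlinarith
  have key : |(ah - bh * ch) - (a - b * c)| ≤
      |ah - a| + |bh - b| * |ch - c| + b * |ch - c| + c * |bh - b| := by
    have hdec : (ah - bh * ch) - (a - b * c) =
        (ah - a) - ((bh - b) * (ch - c) + b * (ch - c) + c * (bh - b)) := by ring
    rw [hdec]
    calc |(ah - a) - ((bh - b) * (ch - c) + b * (ch - c) + c * (bh - b))|
        ≤ |ah - a| + |(bh - b) * (ch - c) + b * (ch - c) + c * (bh - b)| := abs_sub _ _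
      _ ≤ |ah - a| + (|(bh - b) * (ch - c)| + |b * (ch - c)| + |c * (bh - b)|) := by
          have := abs_add_le ((bh - b) * (ch - c) + b * (ch - c)) (c * (bh - b))
          have := abs_add_le ((bh - b) * (ch - c)) (b * (ch - c))
          linarith [abs_add_le ((bh - b) * (ch - c) + b * (ch - c)) (c * (bh - b)),
            abs_add_le ((bh - b) * (ch - c)) (b * (ch - c))]
      _ = |ah - a| + |bh - b| * |ch - c| + b * |ch - c| + c * |bh - b| := by
          rw [abs_mul, abs_mul, abs_mul, abs_of_nonneg hb0, abs_of_nonneg hc0]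
          ring
  have hsq1 : 0 ≤ Real.sqrt (|a - b * c| * r) := Real.sqrt_nonneg _
  have hsq2 : 0 ≤ Real.sqrt (b * c * r) := Real.sqrt_nonneg _
  linarith [key, h1, hprod, hbch, hcbh, hsa, sq_nonneg r, hr.le]


section AB
variable {A B : Type*} [Fintype A] [Fintype B] {N : ℕ}

lemma qVal_point (p : A × B → ℝ) (x : A) (y : B) :
    qVal p (fun w => w = (x, y)) = p (x, y) := by
  unfold qVal
  simp only []
  have := Finset.sum_ite_eq' (Finset.univ : Finset (A × B)) (x, y) p
  simp only [Finset.mem_univ, if_true] at this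
  convert this using 2
  congr

lemma qVal_fst (p : A × B → ℝ) (x : A) :
    qVal p (fun w => w.1 = x) = margFst p x := by
  unfold qVal margFst
  rw [Fintype.sum_prod_type]
  have h : ∀ a : A, (∑ b, if (a, b).1 = x then p (a, b) else 0) =
      if a = x then (∑ b, p (a, b)) else 0 := by
    intro a
    by_cases h : a = x <;> simp [h]
  simp only [h]
  simp

lemma qVal_snd (p : A × B → ℝ) (y : B) :
    qVal p (fun w => w.2 = y) = margSnd p y := by
  unfold qVal margSnd
  rw [Fintype.sum_prod_type]
  refine Finset.sum_congr rfl fun a _ => ?_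
  simp

lemma card_filter_real {n : ℕ} (P : Fin n → Prop) :
    (((univ : Finset (Fin n)).filter P).card : ℝ) = ∑ i, if P i then (1:ℝ) else 0 := by
  rw [Finset.card_filter]
  push_cast
  rfl

lemma empFreq_cnt (s : Fin N → A × B) (w : A × B) :
    empFreq s w = cntQ (fun v => v = w) s / N := rfl

lemma margFst_emp (s : Fin N → A × B) (x : A) :
    margFst (empFreq s) x = cntQ (fun w => w.1 = x) s / N := by
  unfold margFst empFreq cntQ
  rw [← Finset.sum_div]
  congr 1
  simp only [card_filter_real]
  rw [Finset.sum_comm]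
  refine Finset.sum_congr rfl fun i _ => ?_
  by_cases h : (s i).1 = x
  · simp [Prod.ext_iff, h]
  · simp [Prod.ext_iff, h]

lemma margSnd_emp (s : Fin N → A × B) (y : B) :
    margSnd (empFreq s) y = cntQ (fun w => w.2 = y) s / N := by
  unfold margSnd empFreq cntQ
  rw [← Finset.sum_div]
  congr 1
  simp only [card_filter_real]
  rw [Finset.sum_comm]
  refine Finset.sum_congr rfl fun i _ => ?_
  by_cases h : (s i).2 = y
  · simp [Prod.ext_iff, h]
  · simp [Prod.ext_iff, h]

end AB

end AuxConcentration

/-- With probability at least `1 − 3δ`,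
`|Δ̂_{xy} − Δ_{xy}| ≤ 3√(|Δ_{xy}| log(2/δ)/N) + 9√(P_x P_y log(2/δ)/N)
  + 39 log(2/δ)/N + 18 log²(2/δ)/N²`. -/
theorem empirical_delta_concentration {A B : Type*} [Fintype A] [Fintype B]
    (p : A × B → ℝ) (hp : ∀ w, 0 ≤ p w) (hsum : (∑ w, p w) = 1)
    (x : A) (y : B) (N : ℕ) (hN : 1 < N) (δ : ℝ) (hδ0 : 0 < δ) (hδ1 : δ < 1) :
    1 - 3 * δ ≤ iidProb p N (fun s =>
      |(empFreq s (x, y) - margFst (empFreq s) x * margSnd (empFreq s) y) -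
          (p (x, y) - margFst p x * margSnd p y)| ≤
        3 * Real.sqrt (|p (x, y) - margFst p x * margSnd p y| * Real.log (2 / δ) / N) +
          9 * Real.sqrt (margFst p x * margSnd p y * Real.log (2 / δ) / N) +
          39 * Real.log (2 / δ) / N +
          18 * Real.log (2 / δ) ^ 2 / (N : ℝ) ^ 2) := by
  have hN0 : 0 < N := lt_trans Nat.zero_lt_one hN
  have hNr : (0:ℝ) < N := Nat.cast_pos.mpr hN0
  have hL : 0 < Real.log (2 / δ) := Real.log_pos (by rw [lt_div_iff₀ hδ0]; linarith)
  set L := Real.log (2 / δ) with hLdef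
  set Q1 : A × B → Prop := fun w => w = (x, y) with hQ1
  set Q2 : A × B → Prop := fun w => w.1 = x with hQ2
  set Q3 : A × B → Prop := fun w => w.2 = y with hQ3
  set E : (A × B → Prop) → (Fin N → A × B) → Prop := fun Q s =>
    |cntQ Q s / N - qVal p Q| ≤ 2 * Real.sqrt (qVal p Q * L / N) + 2 * L / N with hE
  have hb1 : iidProb p N (fun s => ¬ E Q1 s) ≤ δ := bernstein_tail hp hsum Q1 hδ0 hδ1 hN0
  have hb2 : iidProb p N (fun s => ¬ E Q2 s) ≤ δ := bernstein_tail hp hsum Q2 hδ0 hδ1 hN0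
  have hb3 : iidProb p N (fun s => ¬ E Q3 s) ≤ δ := bernstein_tail hp hsum Q3 hδ0 hδ1 hN0
  set T : (Fin N → A × B) → Prop := fun s =>
      |(empFreq s (x, y) - margFst (empFreq s) x * margSnd (empFreq s) y) -
          (p (x, y) - margFst p x * margSnd p y)| ≤
        3 * Real.sqrt (|p (x, y) - margFst p x * margSnd p y| * L / N) +
          9 * Real.sqrt (margFst p x * margSnd p y * L / N) +
          39 * L / N + 18 * L ^ 2 / (N : ℝ) ^ 2 with hT
  have claim : ∀ s, E Q1 s → E Q2 s → E Q3 s → T s := by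
    intro s e1 e2 e3
    simp only [hE, hQ1, hQ2, hQ3] at e1 e2 e3
    simp only [qVal_point, qVal_fst, qVal_snd] at e1 e2 e3
    rw [← empFreq_cnt] at e1
    rw [← margFst_emp] at e2
    rw [← margSnd_emp] at e3
    have hb0 : 0 ≤ margFst p x := Finset.sum_nonneg fun b _ => hp _
    have hc0 : 0 ≤ margSnd p y := Finset.sum_nonneg fun a _ => hp _
    have hb1' : margFst p x ≤ 1 := by
      rw [← qVal_fst]; exact qVal_le_one hp hsum Q2
    have hc1' : margSnd p y ≤ 1 := by
      rw [← qVal_snd]; exact qVal_le_one hp hsum Q3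
    exact arith_combine hL hNr (hp _) hb0 hb1' hc0 hc1' e1 e2 e3
  have hcompl := iidProb_add_compl hsum T
  have hmono : iidProb p N (fun s => ¬ T s) ≤
      iidProb p N (fun s => (¬ E Q1 s) ∨ ((¬ E Q2 s) ∨ (¬ E Q3 s))) := by
    apply iidProb_mono hp
    intro s hs
    by_contra hc
    push_neg at hc
    exact hs (claim s hc.1 hc.2.1 hc.2.2)
  have hunion : iidProb p N (fun s => (¬ E Q1 s) ∨ ((¬ E Q2 s) ∨ (¬ E Q3 s))) ≤ 3 * δ := by
    calc iidProb p N (fun s => (¬ E Q1 s) ∨ ((¬ E Q2 s) ∨ (¬ E Q3 s)))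
        ≤ iidProb p N (fun s => ¬ E Q1 s) + iidProb p N (fun s => (¬ E Q2 s) ∨ (¬ E Q3 s)) :=
          iidProb_or_le hp
      _ ≤ iidProb p N (fun s => ¬ E Q1 s) +
            (iidProb p N (fun s => ¬ E Q2 s) + iidProb p N (fun s => ¬ E Q3 s)) :=
          add_le_add_right (iidProb_or_le hp) _
      _ ≤ δ + (δ + δ) := by
          exact add_le_add hb1 (add_le_add hb2 hb3)
      _ = 3 * δ := by ring
  linarith
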